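/- Let A, S, T be finite sets, let d₁ : (A → Z/2) → (S → Z/2) and d₂ : (S → Z/2) → (T → Z/2) be Z/2-linear maps with d₂ ∘ d₁ = 0, and let h > 0 be a real number such that for every β : S → Z/2 not in the range of d₁ one has ‖d₂β‖ ≥ h · ‖[β]‖. Let 0 < ε < 1 and 0 ≤ p ≤ 1, and let Y be a random subset of T including each element of T independently with probability p. Then the probability that there exists β : S → Z/2 not in the range of d₁ with ‖d₂β‖_Y ≤ (1−ε) · p · h · ‖[β]‖ is at most (1 + exp(−ε²ph/2))^{|S|} − 1. -/

import Mathlib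

open scoped Classical

/-- The support size of a `ZMod 2`-valued function on a finite set. -/
def cnorm {X : Type*} [Fintype X] (β : X → ZMod 2) : ℕ :=
  (Finset.univ.filter fun x => β x ≠ 0).card

/-- The quotient norm `‖[β]‖ = min_{α} ‖β + d₁ α‖` associated to a linear map
`d₁ : (A → ZMod 2) → (S → ZMod 2)`. -/
noncomputable def qnormGen {A S : Type*} [Fintype S]
    (d₁ : (A → ZMod 2) →ₗ[ZMod 2] (S → ZMod 2)) (β : S → ZMod 2) : ℕ :=
  sInf {m | ∃ α : A → ZMod 2, m = cnorm (β + d₁ α)}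

section Aux

lemma rse_sum_powerset_pow_mul_pow {T : Type*} [DecidableEq T] (s : Finset T) (a b : ℝ) :
    ∑ W ∈ s.powerset, a ^ W.card * b ^ (s.card - W.card) = (a + b) ^ s.card := by
  rw [← Finset.prod_const (a + b), Finset.prod_add]
  exact Finset.sum_congr rfl fun t ht => by
    rw [Finset.prod_const, Finset.prod_const, Finset.card_sdiff_of_subset (Finset.mem_powerset.mp ht)]

lemma rse_exp_neg_le_quadratic {x : ℝ} (hx : 0 ≤ x) :
    Real.exp (-x) ≤ 1 - x + x ^ 2 / 2 := by
  have hd : ∀ y : ℝ, HasDerivAt (fun y : ℝ => 1 - y + y ^ 2 / 2 - Real.exp (-y))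
      (-1 + y + Real.exp (-y)) y := by
    intro y
    have h1 : HasDerivAt (fun y : ℝ => 1 - y) (-1) y := (hasDerivAt_id y).const_sub 1
    have h2 : HasDerivAt (fun y : ℝ => y ^ 2 / 2) (y : ℝ) y := by
      have := (hasDerivAt_pow 2 y).div_const 2
      exact this.congr_deriv (by ring)
    have h3 : HasDerivAt (fun y : ℝ => Real.exp (-y)) (-Real.exp (-y)) y := by
      have := (Real.hasDerivAt_exp (-y)).comp y (hasDerivAt_neg y)
      exact this.congr_deriv (by ring)
    have := (h1.add h2).sub h3
    exact this.congr_deriv (by ring)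
  have hmono : MonotoneOn (fun y : ℝ => 1 - y + y ^ 2 / 2 - Real.exp (-y)) (Set.Ici 0) := by
    apply monotoneOn_of_deriv_nonneg (convex_Ici 0)
    · exact Continuous.continuousOn (by continuity)
    · intro y _
      exact (hd y).differentiableAt.differentiableWithinAt
    · intro y _
      rw [(hd y).deriv]
      nlinarith [Real.add_one_le_exp (-y)]
  have h0 := hmono (Set.self_mem_Ici) (Set.mem_Ici.mpr hx) hx
  norm_num [Real.exp_zero] at h0
  nlinarith [h0]

lemma rse_sum_all_subsets_eq {T : Type*} [Fintype T] [DecidableEq T] (Z : Finset T)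
    (F : Finset T → ℝ) :
    ∑ Y : Finset T, F Y = ∑ W ∈ Z.powerset, ∑ V ∈ Zᶜ.powerset, F (W ∪ V) := by
  rw [← Finset.sum_product']
  apply Finset.sum_bij' (fun Y _ => (Y ∩ Z, Y \ Z)) (fun p _ => p.1 ∪ p.2)
  · intro Y _
    simp only [Finset.mem_product, Finset.mem_powerset]
    constructor
    · exact Finset.inter_subset_right
    · intro t ht
      simp only [Finset.mem_sdiff] at ht
      simp [Finset.mem_compl, ht.2]
  · intro p hp
    exact Finset.mem_univ _
  · intro Y _
    ext t; simp; tauto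
  · intro p hp
    simp only [Finset.mem_product, Finset.mem_powerset] at hp
    obtain ⟨h1, h2⟩ := hp
    have h3 : ∀ t ∈ p.2, t ∉ Z := fun t ht => Finset.mem_compl.mp (h2 ht)
    ext1
    · ext t; simp only [Finset.mem_inter, Finset.mem_union]
      constructor
      · rintro ⟨h4 | h4, h5⟩
        · exact h4
        · exact absurd h5 (h3 t h4)
      · intro h4; exact ⟨Or.inl h4, h1 h4⟩
    · ext t; simp only [Finset.mem_sdiff, Finset.mem_union]
      constructor
      · rintro ⟨h4 | h4, h5⟩
        · exact absurd (h1 h4) h5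
        · exact h4
      · intro h4; exact ⟨Or.inr h4, h3 t h4⟩
  · intro Y _
    congr 1
    ext t; simp; tauto

lemma rse_tail_sum_le {T : Type*} [Fintype T] [DecidableEq T] (Z : Finset T) (c p ε : ℝ)
    (hε0 : 0 < ε) (hp0 : 0 ≤ p) (hp1 : p ≤ 1) :
    ∑ Y : Finset T,
        (if ((Y ∩ Z).card : ℝ) ≤ c then p ^ Y.card * (1 - p) ^ (Fintype.card T - Y.card) else 0)
      ≤ Real.exp (ε * c) * (p * Real.exp (-ε) + (1 - p)) ^ Z.card := by
  have key : ∑ Y : Finset T,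
        (if ((Y ∩ Z).card : ℝ) ≤ c then p ^ Y.card * (1 - p) ^ (Fintype.card T - Y.card) else 0)
      = ∑ W ∈ Z.powerset,
          ((if ((W.card : ℝ)) ≤ c then p ^ W.card * (1 - p) ^ (Z.card - W.card) else 0) *
            ∑ V ∈ Zᶜ.powerset, p ^ V.card * (1 - p) ^ (Zᶜ.card - V.card)) := by
    rw [rse_sum_all_subsets_eq Z]
    apply Finset.sum_congr rfl
    intro W hW
    rw [Finset.mul_sum]
    apply Finset.sum_congr rfl
    intro V hV
    have hWZ : W ⊆ Z := Finset.mem_powerset.mp hW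
    have hVZ : V ⊆ Zᶜ := Finset.mem_powerset.mp hV
    have hdisj : Disjoint W V := Disjoint.mono hWZ hVZ disjoint_compl_right
    have hcard : (W ∪ V).card = W.card + V.card := Finset.card_union_of_disjoint hdisj
    have hWV : (W ∪ V) ∩ Z = W := by
      ext t
      simp only [Finset.mem_inter, Finset.mem_union]
      constructor
      · rintro ⟨h4 | h4, h5⟩
        · exact h4
        · exact absurd h5 (Finset.mem_compl.mp (hVZ h4))
      · intro h4; exact ⟨Or.inl h4, hWZ h4⟩
    have hc2 : Fintype.card T - (W.card + V.card) = (Z.card - W.card) + (Zᶜ.card - V.card) := by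
      have e1 : W.card ≤ Z.card := Finset.card_le_card hWZ
      have e2 : V.card ≤ Zᶜ.card := Finset.card_le_card hVZ
      have e3 : Z.card + Zᶜ.card = Fintype.card T := Finset.card_add_card_compl Z
      omega
    rw [hWV, hcard, hc2, pow_add]
    by_cases hif : ((W.card : ℝ)) ≤ c
    · simp only [hif, if_true]; ring
    · simp only [hif, if_false, zero_mul]
  rw [key]
  have hinner : ∑ V ∈ Zᶜ.powerset, p ^ V.card * (1 - p) ^ (Zᶜ.card - V.card) = 1 := by
    rw [rse_sum_powerset_pow_mul_pow]
    norm_num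
  rw [hinner]
  simp only [mul_one]
  have hfinal : ∑ W ∈ Z.powerset, (p * Real.exp (-ε)) ^ W.card * (1 - p) ^ (Z.card - W.card)
      = (p * Real.exp (-ε) + (1 - p)) ^ Z.card := rse_sum_powerset_pow_mul_pow Z _ _
  rw [← hfinal, Finset.mul_sum]
  apply Finset.sum_le_sum
  intro W _
  by_cases hif : ((W.card : ℝ)) ≤ c
  · simp only [hif, if_true]
    rw [mul_pow, ← Real.exp_nat_mul]
    have h1 : (1:ℝ) ≤ Real.exp (ε * c) * Real.exp ((W.card : ℝ) * (-ε)) := by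
      rw [← Real.exp_add]
      apply Real.one_le_exp
      nlinarith
    have h2 : 0 ≤ p ^ W.card * (1 - p) ^ (Z.card - W.card) :=
      mul_nonneg (pow_nonneg hp0 _) (pow_nonneg (by linarith) _)
    calc p ^ W.card * (1 - p) ^ (Z.card - W.card)
        ≤ (Real.exp (ε * c) * Real.exp ((W.card : ℝ) * (-ε))) *
            (p ^ W.card * (1 - p) ^ (Z.card - W.card)) := le_mul_of_one_le_left h2 h1
      _ = Real.exp (ε * c) * (p ^ W.card * Real.exp ((W.card : ℝ) * (-ε)) *
            (1 - p) ^ (Z.card - W.card)) := by ring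
  · simp only [hif, if_false]
    have : (0:ℝ) ≤ Real.exp (ε * c) * ((p * Real.exp (-ε)) ^ W.card * (1 - p) ^ (Z.card - W.card)) := by
      apply mul_nonneg (Real.exp_nonneg _)
      exact mul_nonneg (pow_nonneg (mul_nonneg hp0 (Real.exp_nonneg _)) _)
        (pow_nonneg (by linarith) _)
    linarith

lemma rse_analytic_bound (h ε p : ℝ) (hpos : 0 < h) (hε0 : 0 < ε) (hε1 : ε < 1)
    (hp0 : 0 ≤ p) (hp1 : p ≤ 1) (N m : ℕ) (hN : h * m ≤ (N : ℝ)) :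
    Real.exp (ε * ((1 - ε) * p * h * m)) * (p * Real.exp (-ε) + (1 - p)) ^ N
      ≤ Real.exp (-(ε ^ 2) * p * h / 2) ^ m := by
  have hb0 : 0 ≤ p * Real.exp (-ε) + (1 - p) :=
    add_nonneg (mul_nonneg hp0 (Real.exp_nonneg _)) (by linarith)
  have hb1 : p * Real.exp (-ε) + (1 - p) ≤ Real.exp (p * (Real.exp (-ε) - 1)) := by
    have := Real.add_one_le_exp (p * (Real.exp (-ε) - 1)); nlinarith
  have hpow : (p * Real.exp (-ε) + (1 - p)) ^ N ≤ Real.exp (p * (Real.exp (-ε) - 1)) ^ N :=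
    pow_le_pow_left₀ hb0 hb1 N
  rw [← Real.exp_nat_mul] at hpow
  have hE : Real.exp (-ε) ≤ 1 - ε + ε ^ 2 / 2 := rse_exp_neg_le_quadratic hε0.le
  have hEneg : p * (Real.exp (-ε) - 1) ≤ 0 := by
    apply mul_nonpos_of_nonneg_of_nonpos hp0
    have : Real.exp (-ε) ≤ Real.exp 0 := Real.exp_le_exp.mpr (by linarith)
    simp only [Real.exp_zero] at this
    linarith
  have step1 : (N : ℝ) * (p * (Real.exp (-ε) - 1)) ≤ (h * m) * (p * (Real.exp (-ε) - 1)) :=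
    mul_le_mul_of_nonpos_right hN hEneg
  have hm0 : (0:ℝ) ≤ (m : ℝ) := Nat.cast_nonneg m
  calc Real.exp (ε * ((1 - ε) * p * h * m)) * (p * Real.exp (-ε) + (1 - p)) ^ N
      ≤ Real.exp (ε * ((1 - ε) * p * h * m)) * Real.exp ((N : ℝ) * (p * (Real.exp (-ε) - 1))) :=
        mul_le_mul_of_nonneg_left hpow (Real.exp_nonneg _)
    _ = Real.exp (ε * ((1 - ε) * p * h * m) + (N : ℝ) * (p * (Real.exp (-ε) - 1))) :=
        (Real.exp_add _ _).symm
    _ ≤ Real.exp ((m : ℝ) * (-(ε ^ 2) * p * h / 2)) := by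
        apply Real.exp_le_exp.mpr
        nlinarith [mul_nonneg (mul_nonneg hp0 hpos.le) hm0, step1, hE]
    _ = Real.exp (-(ε ^ 2) * p * h / 2) ^ m := Real.exp_nat_mul _ m

lemma rse_qnorm_exists {A S : Type*} [Fintype S]
    (d₁ : (A → ZMod 2) →ₗ[ZMod 2] (S → ZMod 2)) (β : S → ZMod 2) :
    ∃ α : A → ZMod 2, qnormGen d₁ β = cnorm (β + d₁ α) :=
  Nat.sInf_mem (⟨cnorm (β + d₁ 0), 0, rfl⟩ :
    {m | ∃ α : A → ZMod 2, m = cnorm (β + d₁ α)}.Nonempty)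

lemma rse_qnorm_add {A S : Type*} [Fintype S]
    (d₁ : (A → ZMod 2) →ₗ[ZMod 2] (S → ZMod 2)) (β : S → ZMod 2) (α : A → ZMod 2) :
    qnormGen d₁ (β + d₁ α) = qnormGen d₁ β := by
  unfold qnormGen
  congr 1
  ext m
  constructor
  · rintro ⟨α', rfl⟩
    exact ⟨α + α', by rw [map_add, ← add_assoc]⟩
  · rintro ⟨α'', rfl⟩
    refine ⟨α'' - α, ?_⟩
    rw [map_sub]
    abel_nf

lemma rse_sum_q_pow_cnorm {S : Type*} [Fintype S] (q : ℝ) :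
    ∑ β : S → ZMod 2, q ^ cnorm β = (1 + q) ^ Fintype.card S := by
  have hterm : ∀ β : S → ZMod 2, q ^ cnorm β = ∏ s : S, (if β s ≠ 0 then q else 1) := by
    intro β
    rw [Finset.prod_ite, Finset.prod_const, Finset.prod_const, one_pow, mul_one]
    rfl
  simp_rw [hterm]
  have := Finset.prod_univ_sum (fun _ : S => (Finset.univ : Finset (ZMod 2)))
    (fun _ v => if v ≠ 0 then q else (1:ℝ))
  rw [Fintype.piFinset_univ] at this
  rw [← this]
  have hinner : ∑ v : ZMod 2, (if v ≠ 0 then q else (1:ℝ)) = 1 + q := by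
    rw [show (Finset.univ : Finset (ZMod 2)) = {0, 1} from by decide]
    rw [Finset.sum_insert (by decide), Finset.sum_singleton]
    norm_num
  simp_rw [hinner]
  rw [Finset.prod_const, Finset.card_univ]

end Aux

/-- the probabilistic heart of the main theorem. Let `d₁`, `d₂`
be consecutive `ZMod 2` coboundary maps on finite sets with `d₂ ∘ d₁ = 0` and
coboundary expansion at least `h > 0` (every non-coboundary `β` satisfies
`‖d₂β‖ ≥ h·‖[β]‖`). For `0 < ε < 1` and `0 ≤ p ≤ 1`, the probability — for a
random subset `Y ⊆ T`, each element kept independently with probability `p`,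
expressed as a weighted sum over all subsets — that some non-coboundary `β`
has `‖d₂β‖_Y ≤ (1-ε)·p·h·‖[β]‖ ` is at most `(1 + e^{-ε²ph/2})^{|S|} - 1`. -/
theorem random_subcomplex_expansion
    {A S T : Type*} [Fintype A] [Fintype S] [Fintype T] [DecidableEq T]
    (d₁ : (A → ZMod 2) →ₗ[ZMod 2] (S → ZMod 2))
    (d₂ : (S → ZMod 2) →ₗ[ZMod 2] (T → ZMod 2))
    (hdd : ∀ α : A → ZMod 2, d₂ (d₁ α) = 0)
    (h : ℝ) (hpos : 0 < h)
    (hexp : ∀ β : S → ZMod 2, β ∉ Set.range d₁ →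
      (cnorm (d₂ β) : ℝ) ≥ h * (qnormGen d₁ β : ℝ))
    (ε p : ℝ) (hε0 : 0 < ε) (hε1 : ε < 1) (hp0 : 0 ≤ p) (hp1 : p ≤ 1) :
    (∑ Y : Finset T,
        if ∃ β : S → ZMod 2, β ∉ Set.range d₁ ∧
            ((Y.filter fun t => d₂ β t ≠ 0).card : ℝ) ≤ (1 - ε) * p * h * (qnormGen d₁ β : ℝ)
          then p ^ Y.card * (1 - p) ^ (Fintype.card T - Y.card) else 0)
      ≤ (1 + Real.exp (-(ε ^ 2) * p * h / 2)) ^ (Fintype.card S) - 1 := by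
  set q : ℝ := Real.exp (-(ε ^ 2) * p * h / 2) with hqdef
  have hq0 : 0 < q := Real.exp_pos _
  set w : Finset T → ℝ := fun Y => p ^ Y.card * (1 - p) ^ (Fintype.card T - Y.card) with hwdef
  have hw0 : ∀ Y : Finset T, 0 ≤ w Y := fun Y =>
    mul_nonneg (pow_nonneg hp0 _) (pow_nonneg (by linarith) _)
  set R : Finset (S → ZMod 2) :=
    Finset.univ.filter fun β => β ∉ Set.range d₁ ∧ cnorm β = qnormGen d₁ β with hRdef
  -- Step A: union bound
  have stepA : ∀ Y : Finset T,
      (if ∃ β : S → ZMod 2, β ∉ Set.range d₁ ∧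
            ((Y.filter fun t => d₂ β t ≠ 0).card : ℝ) ≤ (1 - ε) * p * h * (qnormGen d₁ β : ℝ)
          then w Y else 0)
      ≤ ∑ β ∈ R,
          (if ((Y.filter fun t => d₂ β t ≠ 0).card : ℝ) ≤ (1 - ε) * p * h * (qnormGen d₁ β : ℝ)
            then w Y else 0) := by
    intro Y
    by_cases hbad : ∃ β : S → ZMod 2, β ∉ Set.range d₁ ∧
        ((Y.filter fun t => d₂ β t ≠ 0).card : ℝ) ≤ (1 - ε) * p * h * (qnormGen d₁ β : ℝ)
    · rw [if_pos hbad]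
      obtain ⟨β₀, hβ₀r, hβ₀e⟩ := hbad
      obtain ⟨α, hα⟩ := rse_qnorm_exists d₁ β₀
      set β' : S → ZMod 2 := β₀ + d₁ α with hβ'def
      have hβ'r : β' ∉ Set.range d₁ := by
        rintro ⟨γ, hγ⟩
        exact hβ₀r ⟨γ - α, by rw [map_sub, hγ, hβ'def]; abel⟩
      have hd2 : d₂ β' = d₂ β₀ := by rw [hβ'def, map_add, hdd, add_zero]
      have hqn : qnormGen d₁ β' = qnormGen d₁ β₀ := rse_qnorm_add d₁ β₀ α
      have hcn : cnorm β' = qnormGen d₁ β' := by rw [hqn, ← hα]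
      have hβ'R : β' ∈ R := by
        rw [hRdef, Finset.mem_filter]
        exact ⟨Finset.mem_univ _, hβ'r, hcn⟩
      have hev : ((Y.filter fun t => d₂ β' t ≠ 0).card : ℝ)
          ≤ (1 - ε) * p * h * (qnormGen d₁ β' : ℝ) := by
        rw [hqn]
        simp only [hd2]
        exact hβ₀e
      have := Finset.single_le_sum (f := fun β : S → ZMod 2 =>
          if ((Y.filter fun t => d₂ β t ≠ 0).card : ℝ) ≤ (1 - ε) * p * h * (qnormGen d₁ β : ℝ)
            then w Y else 0)
        (fun i _ => by split <;> first | exact hw0 Y | exact le_rfl) hβ'R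
      rw [if_pos hev] at this
      exact this
    · rw [if_neg hbad]
      exact Finset.sum_nonneg fun i _ => by split <;> first | exact hw0 Y | exact le_rfl
  -- Step B: per-β Chernoff bound
  have stepB : ∀ β ∈ R,
      (∑ Y : Finset T,
        if ((Y.filter fun t => d₂ β t ≠ 0).card : ℝ) ≤ (1 - ε) * p * h * (qnormGen d₁ β : ℝ)
          then w Y else 0) ≤ q ^ cnorm β := by
    intro β hβ
    rw [hRdef, Finset.mem_filter] at hβ
    obtain ⟨-, hβr, hβcn⟩ := hβ
    set Z : Finset T := Finset.univ.filter fun t => d₂ β t ≠ 0 with hZdef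
    have hfe : ∀ Y : Finset T, (Y.filter fun t => d₂ β t ≠ 0) = Y ∩ Z := by
      intro Y; ext t; simp [hZdef]
    set c : ℝ := (1 - ε) * p * h * (qnormGen d₁ β : ℝ) with hcdef
    have hre : (∑ Y : Finset T,
        if ((Y.filter fun t => d₂ β t ≠ 0).card : ℝ) ≤ c then w Y else 0)
        = ∑ Y : Finset T, if ((Y ∩ Z).card : ℝ) ≤ c then w Y else 0 := by
      apply Finset.sum_congr rfl
      intro Y _
      rw [hfe Y]
    rw [hre]
    have hN : h * (qnormGen d₁ β : ℝ) ≤ (Z.card : ℝ) := by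
      have := hexp β hβr
      have hZc : Z.card = cnorm (d₂ β) := rfl
      rw [hZc]
      exact this
    calc (∑ Y : Finset T, if ((Y ∩ Z).card : ℝ) ≤ c then w Y else 0)
        ≤ Real.exp (ε * c) * (p * Real.exp (-ε) + (1 - p)) ^ Z.card :=
          rse_tail_sum_le Z c p ε hε0 hp0 hp1
      _ ≤ q ^ (qnormGen d₁ β) := by
          rw [hcdef, hqdef]
          exact rse_analytic_bound h ε p hpos hε0 hε1 hp0 hp1 Z.card (qnormGen d₁ β) hN
      _ = q ^ cnorm β := by rw [hβcn]
  -- Step C: counting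
  have stepC : ∑ β ∈ R, q ^ cnorm β ≤ (1 + q) ^ Fintype.card S - 1 := by
    have hsub : R ⊆ Finset.univ.filter fun β : S → ZMod 2 => β ≠ 0 := by
      intro β hβ
      rw [hRdef, Finset.mem_filter] at hβ
      rw [Finset.mem_filter]
      refine ⟨Finset.mem_univ _, fun h0 => hβ.2.1 ⟨0, by rw [map_zero, h0]⟩⟩
    have h1 : ∑ β ∈ R, q ^ cnorm β
        ≤ ∑ β ∈ Finset.univ.filter (fun β : S → ZMod 2 => β ≠ 0), q ^ cnorm β :=
      Finset.sum_le_sum_of_subset_of_nonneg hsub fun _ _ _ => pow_nonneg hq0.le _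
    have h2 : ∑ β ∈ Finset.univ.filter (fun β : S → ZMod 2 => β ≠ 0), q ^ cnorm β
        = (∑ β : S → ZMod 2, q ^ cnorm β) - 1 := by
      rw [← Finset.sum_filter_add_sum_filter_not Finset.univ (fun β : S → ZMod 2 => β ≠ 0)
        (fun β => q ^ cnorm β)]
      have hzero : Finset.univ.filter (fun β : S → ZMod 2 => ¬β ≠ 0) = {0} := by
        ext β; simp
      rw [hzero, Finset.sum_singleton]
      have : cnorm (0 : S → ZMod 2) = 0 := by simp [cnorm]
      rw [this, pow_zero]
      ring
    rw [h2, rse_sum_q_pow_cnorm] at h1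
    exact h1
  -- Assemble
  calc (∑ Y : Finset T,
        if ∃ β : S → ZMod 2, β ∉ Set.range d₁ ∧
            ((Y.filter fun t => d₂ β t ≠ 0).card : ℝ) ≤ (1 - ε) * p * h * (qnormGen d₁ β : ℝ)
          then p ^ Y.card * (1 - p) ^ (Fintype.card T - Y.card) else 0)
      ≤ ∑ Y : Finset T, ∑ β ∈ R,
          (if ((Y.filter fun t => d₂ β t ≠ 0).card : ℝ) ≤ (1 - ε) * p * h * (qnormGen d₁ β : ℝ)
            then w Y else 0) := Finset.sum_le_sum fun Y _ => stepA Y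
    _ = ∑ β ∈ R, ∑ Y : Finset T,
          (if ((Y.filter fun t => d₂ β t ≠ 0).card : ℝ) ≤ (1 - ε) * p * h * (qnormGen d₁ β : ℝ)
            then w Y else 0) := Finset.sum_comm
    _ ≤ ∑ β ∈ R, q ^ cnorm β := Finset.sum_le_sum stepB
    _ ≤ (1 + q) ^ Fintype.card S - 1 := stepC
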